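/- For every n ≥ 0, in the ring of multivariate polynomials MvPolynomial σ ℤ over a finite type σ: ∑_{λ ⊢ n} (∏_{i=1}^{r(λ)} (λ_i+1)) · m_λ = ∑_{d=0}^n h_d · h_{n−d}, where the left sum is over all partitions λ = (λ_1 ≥ … ≥ λ_{r(λ)} > 0) of n. -/

import Mathlib

open MvPolynomial

noncomputable def FF (σ : Type) [Fintype σ] (m : Multiset σ) : MvPolynomial σ ℤ :=
  (m.map X).prod

lemma FF_add (σ : Type) [Fintype σ] (a b : Multiset σ) :
    FF σ (a + b) = FF σ a * FF σ b := by
  simp [FF]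

lemma key (σ : Type) [Fintype σ] [DecidableEq σ] (n d : ℕ) (hd : d ≤ n) :
    hsymm σ ℤ d * hsymm σ ℤ (n - d) =
      ∑ s : Sym σ n,
        ((Finset.Iic (s : Multiset σ)).filter (fun t => Multiset.card t = d)).card •
          FF σ (s : Multiset σ) := by
  rw [hsymm, hsymm, Finset.sum_mul_sum]
  have : ∀ s : Sym σ n,
      ((Finset.Iic (s : Multiset σ)).filter (fun t => Multiset.card t = d)).card •
        FF σ (s : Multiset σ)
      = ∑ _t ∈ (Finset.Iic (s : Multiset σ)).filter (fun t => Multiset.card t = d),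
          FF σ (s : Multiset σ) := by
    intro s; rw [Finset.sum_const]
  simp_rw [this]
  rw [← Finset.sum_product', Finset.sum_sigma']
  refine Finset.sum_bij'
    (fun p _ => (⟨⟨(p.1 : Multiset σ) + (p.2 : Multiset σ), by
        simp [p.1.2, p.2.2, Nat.add_sub_cancel' hd]⟩, (p.1 : Multiset σ)⟩ :
        Σ _s : Sym σ n, Multiset σ))
    (fun q hq => (⟨q.2, by
        have h := Finset.mem_filter.1 (Finset.mem_sigma.1 hq).2
        exact h.2⟩,
      ⟨(q.1 : Multiset σ) - q.2, by
        have h := Finset.mem_filter.1 (Finset.mem_sigma.1 hq).2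
        have hle : q.2 ≤ (q.1 : Multiset σ) := Finset.mem_Iic.1 h.1
        rw [Multiset.card_sub hle, h.2, Sym.card_coe]⟩))
    ?_ ?_ ?_ ?_ ?_
  · intro p _
    refine Finset.mem_sigma.2 ⟨Finset.mem_univ _, Finset.mem_filter.2 ⟨?_, p.1.2⟩⟩
    exact Finset.mem_Iic.2 (Multiset.le_add_right _ _)
  · intro q _
    simp [Finset.mem_product]
  · intro p _
    refine Prod.ext (Subtype.ext ?_) (Subtype.ext ?_) <;> simp
  · intro q hq
    have h := Finset.mem_filter.1 (Finset.mem_sigma.1 hq).2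
    have hle : q.2 ≤ (q.1 : Multiset σ) := Finset.mem_Iic.1 h.1
    refine Sigma.ext ?_ ?_
    · exact Subtype.ext (by simp [add_tsub_cancel_of_le hle])
    · simp
  · intro p _
    simp [FF_add, FF]

/-- For every `n ≥ 0`, in `MvPolynomial σ ℤ` over a finite type `σ`:
`∑_{λ ⊢ n} (∏ᵢ (λᵢ+1)) m_λ = ∑_{d=0}^n h_d h_{n-d}`. -/
theorem sum_msymm_eq_sum_hsymm_mul (σ : Type) [Fintype σ] [DecidableEq σ] (n : ℕ) :
    ∑ lam : n.Partition,
        (((lam.parts.map (· + 1)).prod : ℕ) : ℤ) • msymm σ ℤ lam =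
      ∑ d ∈ Finset.range (n + 1), hsymm σ ℤ d * hsymm σ ℤ (n - d) := by
  classical
  have step : ∀ lam : n.Partition,
      (((lam.parts.map (· + 1)).prod : ℕ) : ℤ) • msymm σ ℤ lam
      = ∑ a : {a : Sym σ n // Nat.Partition.ofSym a = lam},
          (Finset.Iic ((a : Sym σ n) : Multiset σ)).card •
            FF σ ((a : Sym σ n) : Multiset σ) := by
    intro lam
    rw [msymm, Finset.smul_sum]
    refine Finset.sum_congr rfl fun a _ => ?_
    obtain ⟨a, rfl⟩ := a
    rw [natCast_zsmul]
    congr 1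
    rw [Multiset.card_Iic]
    simp only [Nat.Partition.ofSym, Multiset.map_map, Function.comp_def]
    rw [Finset.prod]
    simp [Multiset.toFinset_val]
  calc ∑ lam : n.Partition, (((lam.parts.map (· + 1)).prod : ℕ) : ℤ) • msymm σ ℤ lam
      = ∑ lam : n.Partition, ∑ a : {a : Sym σ n // Nat.Partition.ofSym a = lam},
          (Finset.Iic ((a : Sym σ n) : Multiset σ)).card •
            FF σ ((a : Sym σ n) : Multiset σ) := by
        exact Finset.sum_congr rfl fun lam _ => step lam
    _ = ∑ s : Sym σ n, (Finset.Iic (s : Multiset σ)).card • FF σ (s : Multiset σ) :=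
        by
          exact Fintype.sum_fiberwise (ι := Sym σ n) (κ := n.Partition) (M := MvPolynomial σ ℤ)
            (fun a : Sym σ n => Nat.Partition.ofSym a)
            (fun s : Sym σ n => (Finset.Iic (s : Multiset σ)).card • FF σ (s : Multiset σ))
    _ = ∑ d ∈ Finset.range (n + 1), hsymm σ ℤ d * hsymm σ ℤ (n - d) := by
        rw [Finset.sum_congr rfl
          (fun d hd => key σ n d (Nat.lt_succ_iff.1 (Finset.mem_range.1 hd)))]
        rw [Finset.sum_comm]
        refine Finset.sum_congr rfl fun s _ => ?_
        rw [← Finset.sum_smul]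
        congr 1
        refine (Finset.card_eq_sum_card_fiberwise (f := Multiset.card)
          (s := Finset.Iic (s : Multiset σ)) (t := Finset.range n.succ) ?_)
        intro t ht
        rw [Finset.mem_coe] at ht
        rw [Finset.mem_coe, Finset.mem_range, Nat.lt_succ_iff]
        calc Multiset.card t ≤ Multiset.card (s : Multiset σ) :=
              Multiset.card_le_card (Finset.mem_Iic.1 ht)
          _ = n := Sym.card_coe
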